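/- Let A be an additively idempotent irreducible semiring and M a commutative monoid. Then the monoid semiring A[M] is irreducible: if the product of two elements of A[M] is nilpotent, then one of them is nilpotent. -/

import Mathlib

section Aux

variable {A : Type*} [CommSemiring A]

private lemma aux_eq_zero_of_add (hidem : ∀ a : A, a + a = a) {a b : A}
    (h : a + b = 0) : a = 0 := by
  calc a = a + 0 := (add_zero a).symm
    _ = a + (a + b) := by rw [h]
    _ = (a + a) + b := (add_assoc _ _ _).symm
    _ = a + b := by rw [hidem]
    _ = 0 := h

private lemma aux_le_trans {a b c : A} (h1 : a + b = b) (h2 : b + c = c) :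
    a + c = c := by rw [← h2, ← add_assoc, h1]

private lemma aux_mul_le {a b c d : A} (h1 : a + b = b) (h2 : c + d = d) :
    a * c + b * d = b * d :=
  aux_le_trans (by rw [← add_mul, h1]) (by rw [← mul_add, h2])

private lemma aux_pow_le {a b : A} (h : a + b = b) :
    ∀ n : ℕ, a ^ (n + 1) + b ^ (n + 1) = b ^ (n + 1)
  | 0 => by simpa using h
  | n + 1 => by
    rw [pow_succ a (n + 1), pow_succ b (n + 1)]
    exact aux_mul_le (aux_pow_le h n) h

private lemma aux_nilpotent_of_le {a b : A} (h : a + b = b) (hb : IsNilpotent b) :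
    IsNilpotent a := by
  obtain ⟨n, hn⟩ := hb
  have hb1 : b ^ (n + 1) = 0 := by rw [pow_succ, hn, zero_mul]
  have := aux_pow_le h n
  rw [hb1, add_zero] at this
  exact ⟨n + 1, this⟩

private lemma aux_add_sum (hidem : ∀ a : A, a + a = a) {ι : Type*} {s : Finset ι}
    {f : ι → A} {a : ι} (ha : a ∈ s) :
    f a + ∑ i ∈ s, f i = ∑ i ∈ s, f i := by
  classical
  rw [← Finset.add_sum_erase s f ha, ← add_assoc, hidem]

variable {M : Type*} [CommMonoid M]

private lemma aux_coeff_mul (hidem : ∀ a : A, a + a = a)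
    (f g : MonoidAlgebra A M) (m m' : M) :
    f.coeff m * g.coeff m' + (f * g).coeff (m * m') = (f * g).coeff (m * m') := by
  classical
  by_cases hf : f.coeff m = 0
  · rw [hf, zero_mul, zero_add]
  by_cases hg : g.coeff m' = 0
  · rw [hg, mul_zero, zero_add]
  have hm : m ∈ f.coeff.support := Finsupp.mem_support_iff.2 hf
  have hm' : m' ∈ g.coeff.support := Finsupp.mem_support_iff.2 hg
  rw [MonoidAlgebra.mul_apply]
  simp only [Finsupp.sum]
  have h1 : f.coeff m * g.coeff m' +
      (∑ a₂ ∈ g.coeff.support, if m * a₂ = m * m' then f.coeff m * g.coeff a₂ else 0) =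
      ∑ a₂ ∈ g.coeff.support, if m * a₂ = m * m' then f.coeff m * g.coeff a₂ else 0 := by
    have := aux_add_sum hidem
      (f := fun a₂ => if m * a₂ = m * m' then f.coeff m * g.coeff a₂ else 0) hm'
    simpa using this
  have h2 := aux_add_sum hidem
    (f := fun a₁ => ∑ a₂ ∈ g.coeff.support, if a₁ * a₂ = m * m' then f.coeff a₁ * g.coeff a₂ else 0) hm
  exact aux_le_trans h1 h2

private lemma aux_coeff_pow (hidem : ∀ a : A, a + a = a)
    (z : MonoidAlgebra A M) (m : M) :
    ∀ n : ℕ, (z.coeff m) ^ (n + 1) + (z ^ (n + 1)).coeff (m ^ (n + 1)) = (z ^ (n + 1)).coeff (m ^ (n + 1))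
  | 0 => by simpa using hidem (z.coeff m)
  | n + 1 => by
    have ih := aux_coeff_pow hidem z m n
    have h1 : (z.coeff m) ^ (n + 1) * z.coeff m + (z ^ (n + 1)).coeff (m ^ (n + 1)) * z.coeff m =
        (z ^ (n + 1)).coeff (m ^ (n + 1)) * z.coeff m := by rw [← add_mul, ih]
    have h2 := aux_coeff_mul hidem (z ^ (n + 1)) z (m ^ (n + 1)) m
    rw [pow_succ (z.coeff m) (n + 1), pow_succ z (n + 1), pow_succ m (n + 1)]
    exact aux_le_trans h1 h2

private lemma aux_coeff_nilpotent (hidem : ∀ a : A, a + a = a)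
    {z : MonoidAlgebra A M} (hz : IsNilpotent z) (m : M) :
    IsNilpotent (z.coeff m) := by
  obtain ⟨n, hn⟩ := hz
  have hz1 : z ^ (n + 1) = 0 := by rw [pow_succ, hn, zero_mul]
  have := aux_coeff_pow hidem z m n
  rw [hz1] at this
  simp only [MonoidAlgebra.coeff_zero, Finsupp.coe_zero, Pi.zero_apply, add_zero] at this
  exact ⟨n + 1, this⟩

private lemma aux_nilpotent_of_coeffs {x : MonoidAlgebra A M}
    (hx : ∀ m : M, IsNilpotent (x.coeff m)) : IsNilpotent x := by
  have hx' : x = ∑ m ∈ x.coeff.support, MonoidAlgebra.single m (x.coeff m) := by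
    conv_lhs => rw [← MonoidAlgebra.sum_coeff_single x]
    rfl
  rw [hx']
  apply isNilpotent_sum
  intro m _
  obtain ⟨k, hk⟩ := hx m
  exact ⟨k, by rw [MonoidAlgebra.single_pow, hk]; simp⟩

end Aux

/-- Let `A` be an additively idempotent irreducible commutative semiring
and `M` a commutative monoid.  Then the monoid semiring `A[M]` is irreducible: if the
product of two elements of `A[M]` is nilpotent, then one of them is nilpotent. -/
theorem monoidAlgebra_irreducible {A M : Type*} [CommSemiring A] [CommMonoid M]
    (hidem : ∀ a : A, a + a = a)
    (hirr : ∀ x y : A, IsNilpotent (x * y) → IsNilpotent x ∨ IsNilpotent y)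
    (x y : MonoidAlgebra A M) (h : IsNilpotent (x * y)) :
    IsNilpotent x ∨ IsNilpotent y := by
  by_cases hX : ∀ m : M, IsNilpotent (x.coeff m)
  · exact Or.inl (aux_nilpotent_of_coeffs hX)
  · push_neg at hX
    obtain ⟨m, hm⟩ := hX
    right
    apply aux_nilpotent_of_coeffs
    intro m'
    have h1 := aux_coeff_mul hidem x y m m'
    have h2 := aux_coeff_nilpotent hidem h (m * m')
    have h3 : IsNilpotent (x.coeff m * y.coeff m') := aux_nilpotent_of_le h1 h2
    rcases hirr _ _ h3 with h4 | h4
    · exact absurd h4 hm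
    · exact h4
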